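/- Let x₀ ∈ D° and x ∈ D. Then for every w ∈ W one has dist(x₀, w x) ≥ dist(x₀, x), and the inequality is strict for every w ∈ W with w x ≠ x. -/

import Mathlib

open scoped RealInnerProductSpace

noncomputable section

/-- `g` is the orthogonal reflection in the affine hyperplane `{x | ⟪x, u⟫ = c}`. -/
def IsAffRefl {V : Type*} [NormedAddCommGroup V] [InnerProductSpace ℝ V]
    (g : V ≃ᵢ V) : Prop :=
  ∃ (u : V) (c : ℝ), u ≠ 0 ∧ ∀ x : V, g x = x - ((2 * (⟪x, u⟫ - c)) / ⟪u, u⟫) • u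

/-- The union of the reflection hyperplanes (mirrors) of the reflections belonging to `W`;
the mirror of a reflection is exactly its set of fixed points. -/
def affMirrors {V : Type*} [NormedAddCommGroup V] [InnerProductSpace ℝ V]
    (W : Subgroup (V ≃ᵢ V)) : Set V :=
  ⋃ g ∈ {g : V ≃ᵢ V | g ∈ W ∧ IsAffRefl g}, {x : V | g x = x}

section Aux

variable {V : Type*} [NormedAddCommGroup V] [InnerProductSpace ℝ V]

lemma real_inner_self_pos' {u : V} (hu : u ≠ 0) : (0:ℝ) < ⟪u, u⟫ := by
  rw [real_inner_self_eq_norm_sq]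
  exact pow_pos (norm_pos_iff.mpr hu) 2

lemma inner_self_ne_zero' {u : V} (hu : u ≠ 0) : ⟪u, u⟫ ≠ 0 :=
  ne_of_gt (real_inner_self_pos' hu)

lemma affRefl_fix_iff {g : V ≃ᵢ V} {u : V} {c : ℝ} (hu : u ≠ 0)
    (hg : ∀ q : V, g q = q - ((2 * (⟪q, u⟫ - c)) / ⟪u, u⟫) • u) (p : V) :
    g p = p ↔ ⟪p, u⟫ = c := by
  have hU := inner_self_ne_zero' hu
  rw [hg p, sub_eq_self, smul_eq_zero, div_eq_zero_iff]
  constructor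
  · rintro ((h | h) | h)
    · linarith
    · exact absurd h hU
    · exact absurd h hu
  · intro h; left; left; rw [h]; ring

lemma affRefl_dist_sq {g : V ≃ᵢ V} {u : V} {c : ℝ} (hu : u ≠ 0)
    (hg : ∀ q : V, g q = q - ((2 * (⟪q, u⟫ - c)) / ⟪u, u⟫) • u) (z y : V) :
    dist z (g y) ^ 2 = dist z y ^ 2 + 4 * ((⟪y, u⟫ - c) * (⟪z, u⟫ - c)) / ⟪u, u⟫ := by
  have hU : ⟪u, u⟫ ≠ 0 := inner_self_ne_zero' hu
  have h1 : z - g y = (z - y) + ((2 * (⟪y, u⟫ - c)) / ⟪u, u⟫) • u := by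
    rw [hg y]; abel
  rw [dist_eq_norm, dist_eq_norm, h1, norm_add_sq_real, real_inner_smul_right,
    inner_sub_left, norm_smul, mul_pow, Real.norm_eq_abs, sq_abs,
    ← real_inner_self_eq_norm_sq u]
  field_simp
  ring

lemma affRefl_dist_lt {g : V ≃ᵢ V} {u : V} {c : ℝ} (hu : u ≠ 0)
    (hg : ∀ q : V, g q = q - ((2 * (⟪q, u⟫ - c)) / ⟪u, u⟫) • u) {z y : V}
    (hzy : (⟪y, u⟫ - c) * (⟪z, u⟫ - c) < 0) :
    dist z (g y) < dist z y := by
  have hUpos : (0:ℝ) < ⟪u, u⟫ := real_inner_self_pos' hu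
  have h := affRefl_dist_sq hu hg z y
  have hneg : 4 * ((⟪y, u⟫ - c) * (⟪z, u⟫ - c)) / ⟪u, u⟫ < 0 :=
    div_neg_of_neg_of_pos (by linarith) hUpos
  have h2 : dist z (g y) ^ 2 < dist z y ^ 2 := by rw [h]; linarith
  exact lt_of_pow_lt_pow_left₀ 2 dist_nonneg h2

lemma IsAffRefl.conj {g : V ≃ᵢ V} (hg : IsAffRefl g) (v : V ≃ᵢ V) :
    IsAffRefl (v * g * v⁻¹) := by
  obtain ⟨u, c, hu, hform⟩ := hg
  set A := v.toRealLinearIsometryEquiv with hA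
  have hvap : ∀ p : V, v p = A p + v 0 := by
    intro p
    rw [hA, IsometryEquiv.toRealLinearIsometryEquiv_apply]
    abel
  have hvsymm : ∀ p : V, (v⁻¹ : V ≃ᵢ V) p = A.symm (p - v 0) := by
    intro p
    have : A.symm (p - v 0) = v.symm (p - v 0 + v 0) := by
      rw [hA, IsometryEquiv.toRealLinearIsometryEquiv_symm_apply]
    rw [this]
    norm_num
    rfl
  refine ⟨A u, c + ⟪v 0, A u⟫, fun h => hu (A.map_eq_zero_iff.mp h), ?_⟩
  intro x
  have hq : (v * g * v⁻¹) x = v (g ((v⁻¹ : V ≃ᵢ V) x)) := rfl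
  rw [hq, hvsymm]
  set q := A.symm (x - v 0) with hqdef
  have hinner : ⟪q, u⟫ = ⟪x, A u⟫ - ⟪v 0, A u⟫ := by
    have h1 : ⟪q, u⟫ = ⟪A q, A u⟫ := (A.inner_map_map q u).symm
    rw [h1, hqdef, A.apply_symm_apply, inner_sub_left]
  have hUU : ⟪(A u : V), A u⟫ = ⟪u, u⟫ := A.inner_map_map u u
  rw [hform q, hvap, map_sub, map_smul, hqdef, A.apply_symm_apply, hinner, hUU]
  have hs : (2 * ((⟪x, A u⟫ - ⟪v 0, A u⟫) - c)) / ⟪u, u⟫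
      = (2 * (⟪x, A u⟫ - (c + ⟪v 0, A u⟫))) / ⟪u, u⟫ := by ring
  rw [hs]
  abel

end Aux

/-- For points `x₀` in the interior of the fundamental domain `D` and `x ∈ D`, every
`w ∈ W` satisfies `dist x₀ (w x) ≥ dist x₀ x`, strictly whenever `w x ≠ x`. -/
theorem dist_le_orbit_dist_affine {V : Type*} [NormedAddCommGroup V] [InnerProductSpace ℝ V]
    [FiniteDimensional ℝ V]
    (W : Subgroup (V ≃ᵢ V)) (D : Set V)
    (hWgen : Subgroup.closure {g : V ≃ᵢ V | g ∈ W ∧ IsAffRefl g} = W)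
    (hlf : LocallyFinite fun g : {g : V ≃ᵢ V // g ∈ W ∧ IsAffRefl g} => {x : V | g.1 x = x})
    (hpd : ∀ K : Set V, IsCompact K → {g : V ≃ᵢ V | g ∈ W ∧ ∃ x ∈ K, g x ∈ K}.Finite)
    (hD : ∃ x₀ ∈ (affMirrors W)ᶜ, D = closure (connectedComponentIn (affMirrors W)ᶜ x₀))
    (hDcpt : IsCompact D)
    (hcover : ∀ v : V, ∃ w ∈ W, ∃ x ∈ D, w x = v)
    (hdisj : ∀ w ∈ W, ∀ w' ∈ W, w ≠ w' →
      ∀ x ∈ interior D, ∀ x' ∈ interior D, w x ≠ w' x')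
    (x₀ x : V) (hx₀ : x₀ ∈ interior D) (hx : x ∈ D) :
    (∀ w ∈ W, dist x₀ x ≤ dist x₀ (w x)) ∧
    (∀ w ∈ W, w x ≠ x → dist x₀ x < dist x₀ (w x)) := by
  classical
  obtain ⟨p₀, hp₀, hDeq⟩ := hD
  set M := affMirrors W with hM
  set C := connectedComponentIn Mᶜ p₀ with hC
  have hmemM : ∀ p : V, p ∈ M ↔ ∃ g : V ≃ᵢ V, (g ∈ W ∧ IsAffRefl g) ∧ g p = p := by
    intro p
    simp [hM, affMirrors, Set.mem_iUnion]
  have hMclosed : IsClosed M := by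
    have h2 : M = ⋃ g : {g : V ≃ᵢ V // g ∈ W ∧ IsAffRefl g}, {x : V | g.1 x = x} := by
      ext p
      simp [hmemM p, Set.mem_iUnion, Subtype.exists]
    rw [h2]
    exact hlf.isClosed_iUnion fun g => isClosed_eq g.1.continuous continuous_id
  have hCopen : IsOpen C := hMclosed.isOpen_compl.connectedComponentIn
  have hCsub : C ⊆ Mᶜ := connectedComponentIn_subset _ _
  have hp₀C : p₀ ∈ C := mem_connectedComponentIn hp₀
  have hCint : C ⊆ interior D := by
    rw [hDeq]; exact interior_maximal subset_closure hCopen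
  -- the linear functional of a mirror does not vanish on C
  have hfC : ∀ g : V ≃ᵢ V, g ∈ W → ∀ u : V, ∀ c : ℝ, u ≠ 0 →
      (∀ q : V, g q = q - ((2 * (⟪q, u⟫ - c)) / ⟪u, u⟫) • u) →
      ∀ z ∈ C, ⟪z, u⟫ - c ≠ 0 := by
    intro g hgW u c hu hform z hz h0
    exact hCsub hz ((hmemM z).mpr
      ⟨g, ⟨hgW, u, c, hu, hform⟩, (affRefl_fix_iff hu hform z).mpr (sub_eq_zero.mp h0)⟩)
  -- C lies strictly on one side of each mirror
  have hsignC : ∀ g : V ≃ᵢ V, g ∈ W → ∀ u : V, ∀ c : ℝ, u ≠ 0 →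
      (∀ q : V, g q = q - ((2 * (⟪q, u⟫ - c)) / ⟪u, u⟫) • u) →
      ∀ z ∈ C, ∀ z' ∈ C, 0 < (⟪z, u⟫ - c) * (⟪z', u⟫ - c) := by
    intro g hgW u c hu hform z hz z' hz'
    by_contra hle
    push_neg at hle
    have hfz := hfC g hgW u c hu hform z hz
    have hfz' := hfC g hgW u c hu hform z' hz'
    have hlt : (⟪z, u⟫ - c) * (⟪z', u⟫ - c) < 0 :=
      lt_of_le_of_ne hle (mul_ne_zero hfz hfz')
    have hcont : ContinuousOn (fun p : V => (⟪z, u⟫ - c) * (⟪p, u⟫ - c)) C :=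
      (continuous_const.mul ((continuous_id.inner continuous_const).sub
        continuous_const)).continuousOn
    have hIVT := isPreconnected_connectedComponentIn.intermediate_value hz' hz hcont
    have h0mem : (0:ℝ) ∈ Set.Icc ((⟪z, u⟫ - c) * (⟪z', u⟫ - c))
        ((⟪z, u⟫ - c) * (⟪z, u⟫ - c)) :=
      ⟨le_of_lt hlt, le_of_lt (mul_self_pos.mpr hfz)⟩
    obtain ⟨q, hqC, hq0⟩ := hIVT h0mem
    rcases mul_eq_zero.mp hq0 with h | h
    · exact hfz h
    · exact hfC g hgW u c hu hform q hqC h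
  -- closure C lies weakly on the same side
  have hsignD : ∀ g : V ≃ᵢ V, g ∈ W → ∀ u : V, ∀ c : ℝ, u ≠ 0 →
      (∀ q : V, g q = q - ((2 * (⟪q, u⟫ - c)) / ⟪u, u⟫) • u) →
      ∀ z ∈ C, ∀ y ∈ closure C, 0 ≤ (⟪z, u⟫ - c) * (⟪y, u⟫ - c) := by
    intro g hgW u c hu hform z hz y hy
    have hclosed : IsClosed {p : V | 0 ≤ (⟪z, u⟫ - c) * (⟪p, u⟫ - c)} :=
      isClosed_le continuous_const
        (continuous_const.mul ((continuous_id.inner continuous_const).sub continuous_const))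
    exact closure_minimal (fun p hp => le_of_lt (hsignC g hgW u c hu hform z hz p hp))
      hclosed hy
  -- a point weakly on the C-side of every mirror lies in closure C
  have hseg : ∀ z ∈ C, ∀ y : V,
      (∀ g : V ≃ᵢ V, g ∈ W → ∀ u : V, ∀ c : ℝ, u ≠ 0 →
        (∀ q : V, g q = q - ((2 * (⟪q, u⟫ - c)) / ⟪u, u⟫) • u) →
        0 ≤ (⟪z, u⟫ - c) * (⟪y, u⟫ - c)) → y ∈ closure C := by
    intro z hz y hy
    set φ : ℝ → V := fun t => y + t • (z - y) with hφ
    have hφcont : Continuous φ := by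
      exact continuous_const.add (continuous_id.smul continuous_const)
    have himg : φ '' Set.Ioc (0:ℝ) 1 ⊆ Mᶜ := by
      rintro _ ⟨t, ht, rfl⟩ hmem
      obtain ⟨g, ⟨hgW, u, c, hu, hform⟩, hfix⟩ := (hmemM _).mp hmem
      have h0 : ⟪φ t, u⟫ - c = 0 := by
        have := (affRefl_fix_iff hu hform (φ t)).mp hfix
        linarith
      have hfz := hfC g hgW u c hu hform z hz
      have hys := hy g hgW u c hu hform
      have hval : ⟪φ t, u⟫ - c = (1 - t) * (⟪y, u⟫ - c) + t * (⟪z, u⟫ - c) := by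
        simp only [hφ, inner_add_left, real_inner_smul_left, inner_sub_left]
        ring
      have hpos : 0 < (⟪z, u⟫ - c) * (⟪φ t, u⟫ - c) := by
        rw [hval]
        have h1 : 0 ≤ (1 - t) * ((⟪z, u⟫ - c) * (⟪y, u⟫ - c)) :=
          mul_nonneg (by linarith [ht.2]) hys
        have h2 : 0 < t * ((⟪z, u⟫ - c) * (⟪z, u⟫ - c)) :=
          mul_pos ht.1 (mul_self_pos.mpr hfz)
        nlinarith
      rw [h0, mul_zero] at hpos
      exact lt_irrefl 0 hpos
    have hzimg : z ∈ φ '' Set.Ioc (0:ℝ) 1 := by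
      refine ⟨1, by norm_num, ?_⟩
      simp [hφ]
    have hpre : IsPreconnected (φ '' Set.Ioc (0:ℝ) 1) :=
      isPreconnected_Ioc.image φ hφcont.continuousOn
    have hsubC : φ '' Set.Ioc (0:ℝ) 1 ⊆ C := by
      have h1 := hpre.subset_connectedComponentIn hzimg himg
      rwa [← connectedComponentIn_eq (show z ∈ C from hz)] at h1
    have hyc : y ∈ closure (φ '' Set.Ioc (0:ℝ) 1) := by
      have h0c : (0:ℝ) ∈ closure (Set.Ioc (0:ℝ) 1) := by
        rw [closure_Ioc (by norm_num : (0:ℝ) ≠ 1)]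
        exact ⟨le_refl 0, by norm_num⟩
      have h1 := image_closure_subset_closure_image hφcont (s := Set.Ioc (0:ℝ) 1)
      have h2 : y ∈ φ '' closure (Set.Ioc (0:ℝ) 1) := ⟨0, h0c, by simp [hφ]⟩
      exact h1 h2
    exact closure_mono hsubC hyc
  -- a closure point off the mirrors lies in C
  have hCpt : ∀ q ∈ closure C, q ∉ M → q ∈ C := by
    intro q hq hqM
    obtain ⟨ε, hε, hball⟩ := Metric.isOpen_iff.mp hMclosed.isOpen_compl q hqM
    obtain ⟨r, hrball, hrC⟩ :=
      (_root_.mem_closure_iff.mp hq (Metric.ball q ε) Metric.isOpen_ball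
        (Metric.mem_ball_self hε))
    have hconv : Convex ℝ (Metric.ball q ε) := convex_ball q ε
    have hsub : Metric.ball q ε ⊆ connectedComponentIn Mᶜ r :=
      hconv.isPreconnected.subset_connectedComponentIn hrball hball
    have heq : C = connectedComponentIn Mᶜ r := connectedComponentIn_eq hrC
    rw [heq]
    exact hsub (Metric.mem_ball_self hε)
  -- interior D is contained in C
  have hintC : interior D ⊆ C := by
    intro q hq
    have hqcl : q ∈ closure C := by
      rw [hDeq] at hq
      exact interior_subset hq
    refine hCpt q hqcl ?_
    intro hqM
    obtain ⟨g, ⟨hgW, u, c, hu, hform⟩, hfix⟩ := (hmemM q).mp hqM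
    have hfq : ⟪q, u⟫ - c = 0 := by
      have := (affRefl_fix_iff hu hform q).mp hfix
      linarith
    have hop : q ∈ interior (closure C) := by rwa [hDeq] at hq
    obtain ⟨ε, hε, hball⟩ := Metric.isOpen_iff.mp isOpen_interior q hop
    have hf0 : ⟪p₀, u⟫ - c ≠ 0 := hfC g hgW u c hu hform p₀ hp₀C
    have hun : (0:ℝ) < ‖u‖ := norm_pos_iff.mpr hu
    have habs : (0:ℝ) < |⟪p₀, u⟫ - c| := abs_pos.mpr hf0
    set δ : ℝ := -(⟪p₀, u⟫ - c) * (ε / (2 * ‖u‖ * |⟪p₀, u⟫ - c|)) with hδ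
    set q' := q + δ • u with hq'
    have hq'ball : q' ∈ Metric.ball q ε := by
      rw [Metric.mem_ball, dist_eq_norm, hq']
      have : q + δ • u - q = δ • u := by abel
      rw [this, norm_smul]
      have hδabs : |δ| = ε / (2 * ‖u‖) := by
        rw [hδ, abs_mul, abs_neg, abs_div]
        rw [abs_of_pos hε, abs_of_pos (by positivity : (0:ℝ) < 2 * ‖u‖ * |⟪p₀, u⟫ - c|)]
        field_simp
      rw [Real.norm_eq_abs, hδabs]
      rw [div_mul_eq_mul_div]
      rw [div_lt_iff₀ (by positivity)]
      nlinarith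
    have hq'cl : q' ∈ closure C := interior_subset (hball hq'ball)
    have hcontr := hsignD g hgW u c hu hform p₀ hp₀C q' hq'cl
    have hfq' : ⟪q', u⟫ - c = δ * ⟪u, u⟫ := by
      rw [hq', inner_add_left, real_inner_smul_left]
      linarith
    rw [hfq'] at hcontr
    have hU : (0:ℝ) < ⟪u, u⟫ := real_inner_self_pos' hu
    have hδsign : (⟪p₀, u⟫ - c) * δ < 0 := by
      rw [hδ]
      have : (⟪p₀, u⟫ - c) * (-(⟪p₀, u⟫ - c) * (ε / (2 * ‖u‖ * |⟪p₀, u⟫ - c|)))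
          = -((⟪p₀, u⟫ - c) * (⟪p₀, u⟫ - c)) * (ε / (2 * ‖u‖ * |⟪p₀, u⟫ - c|)) := by ring
      rw [this]
      have h1 : 0 < (⟪p₀, u⟫ - c) * (⟪p₀, u⟫ - c) := mul_self_pos.mpr hf0
      have h2 : 0 < ε / (2 * ‖u‖ * |⟪p₀, u⟫ - c|) := by positivity
      nlinarith
    nlinarith
  have hx₀C : x₀ ∈ C := hintC hx₀
  have hxcl : x ∈ closure C := by rwa [hDeq] at hx
  -- key step: for base points and orbit bases in C
  have hKEY : ∀ z ∈ C, ∀ x' ∈ C, ∀ w : V ≃ᵢ V, w ∈ W → dist z x' ≤ dist z (w x') := by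
    intro z hz x' hx' w hw
    set K := Metric.closedBall z (dist z x') with hK
    have hx'K : x' ∈ K := by
      rw [hK, Metric.mem_closedBall, dist_comm]
    have hKc : IsCompact K := isCompact_closedBall z _
    have hfin : {g : V ≃ᵢ V | g ∈ W ∧ g x' ∈ K}.Finite :=
      (hpd K hKc).subset fun g hg => ⟨hg.1, x', hx'K, hg.2⟩
    have hSne : {g : V ≃ᵢ V | g ∈ W ∧ g x' ∈ K}.Nonempty :=
      ⟨1, W.one_mem, by simpa using hx'K⟩
    obtain ⟨w₀, hw₀S, hw₀min⟩ :=
      Set.exists_min_image {g : V ≃ᵢ V | g ∈ W ∧ g x' ∈ K}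
        (fun g => dist z (g x')) hfin hSne
    have hw₀K : dist z (w₀ x') ≤ dist z x' := by
      have := hw₀S.2
      rw [hK, Metric.mem_closedBall, dist_comm] at this
      exact this
    have hmin : ∀ g : V ≃ᵢ V, g ∈ W → dist z (w₀ x') ≤ dist z (g x') := by
      intro g hgW
      by_cases hgK : g x' ∈ K
      · exact hw₀min g ⟨hgW, hgK⟩
      · have h2 : dist z x' < dist z (g x') := by
          rw [dist_comm z (g x')]
          exact lt_of_not_ge fun h => hgK (Metric.mem_closedBall.mpr h)
        linarith
    have hw₀side : ∀ g : V ≃ᵢ V, g ∈ W → ∀ u : V, ∀ c : ℝ, u ≠ 0 →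
        (∀ q : V, g q = q - ((2 * (⟪q, u⟫ - c)) / ⟪u, u⟫) • u) →
        0 ≤ (⟪z, u⟫ - c) * (⟪w₀ x', u⟫ - c) := by
      intro g hgW u c hu hform
      by_contra hneg
      push_neg at hneg
      have hlt2 : (⟪w₀ x', u⟫ - c) * (⟪z, u⟫ - c) < 0 := by
        rwa [mul_comm] at hneg
      have hd := affRefl_dist_lt hu hform hlt2
      have h3 := hmin (g * w₀) (W.mul_mem hgW hw₀S.1)
      rw [IsometryEquiv.mul_apply] at h3
      linarith
    have hw₀cl : w₀ x' ∈ closure C := hseg z hz _ hw₀side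
    have hw₀x' : w₀ x' = x' := by
      by_contra hne
      have hw₀1 : w₀ ≠ 1 := by
        rintro rfl
        simp at hne
      have hw₀M : w₀ x' ∉ M := by
        intro hmem
        obtain ⟨g₀, ⟨hg₀W, hg₀refl⟩, hfix⟩ := (hmemM _).mp hmem
        have hconj : IsAffRefl (w₀⁻¹ * g₀ * (w₀⁻¹)⁻¹) := hg₀refl.conj w₀⁻¹
        rw [inv_inv] at hconj
        have hWm : w₀⁻¹ * g₀ * w₀ ∈ W :=
          W.mul_mem (W.mul_mem (W.inv_mem hw₀S.1) hg₀W) hw₀S.1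
        have hfixx : (w₀⁻¹ * g₀ * w₀) x' = x' := by
          have : (w₀⁻¹ * g₀ * w₀) x' = w₀⁻¹ (g₀ (w₀ x')) := rfl
          rw [this, hfix]
          exact w₀.symm_apply_apply x'
        exact hCsub hx' ((hmemM x').mpr ⟨_, ⟨hWm, hconj⟩, hfixx⟩)
      have hw₀C : w₀ x' ∈ C := hCpt _ hw₀cl hw₀M
      exact hdisj w₀ hw₀S.1 1 W.one_mem hw₀1 x' (hCint hx') (w₀ x') (hCint hw₀C)
        (by simp)
    calc dist z x' = dist z (w₀ x') := by rw [hw₀x']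
      _ ≤ dist z (w x') := hmin w hw
  -- extend to x ∈ D = closure C by continuity
  have hpart1 : ∀ z ∈ C, ∀ p ∈ closure C, ∀ w : V ≃ᵢ V, w ∈ W →
      dist z p ≤ dist z (w p) := by
    intro z hz p hp w hw
    have hcl : IsClosed {q : V | dist z q ≤ dist z (w q)} :=
      isClosed_le (continuous_const.dist continuous_id)
        (continuous_const.dist w.continuous)
    exact closure_minimal (fun x' hx' => hKEY z hz x' hx' w hw) hcl hp
  have h1 : ∀ w ∈ W, dist x₀ x ≤ dist x₀ (w x) := fun w hw =>
    hpart1 x₀ hx₀C x hxcl w hw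
  refine ⟨h1, ?_⟩
  intro w hw hne
  by_contra hlt
  push_neg at hlt
  -- w x is a minimizer, so lies in closure C
  have hycl : w x ∈ closure C := by
    refine hseg x₀ hx₀C (w x) ?_
    intro g hgW u c hu hform
    by_contra hneg
    push_neg at hneg
    have hlt2 : (⟪w x, u⟫ - c) * (⟪x₀, u⟫ - c) < 0 := by
      rwa [mul_comm] at hneg
    have hd := affRefl_dist_lt hu hform hlt2
    have h3 := h1 (g * w) (W.mul_mem hgW hw)
    rw [IsometryEquiv.mul_apply] at h3
    linarith
  have hclosed2 : IsClosed {z : V | dist z x ≤ dist z (w x)} :=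
    isClosed_le (continuous_id.dist continuous_const)
      (continuous_id.dist continuous_const)
  have hyin : w x ∈ {z : V | dist z x ≤ dist z (w x)} :=
    closure_minimal (fun z hz => hpart1 z hz x hxcl w hw) hclosed2 hycl
  have hzero : dist (w x) x ≤ 0 := by simpa using hyin
  exact hne (dist_le_zero.mp hzero)
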